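/- For every σ > 0 and every integer r ≥ 1, ∫₀^∞ x^r · f_IG(x|σ,σ) dx = ∫_ℝ θ_r(φ_σ⁻¹(z)) · φ(z) dz, where θ_r(x) = (x^r + x^{1−r})/(1+x) and φ(z) = exp(−z²/2)/√(2π). -/

import Mathlib

open MeasureTheory Real Set

/-- Inverse Gaussian density `f_IG(x | γ, δ)`. -/
noncomputable def fIG (γ δ x : ℝ) : ℝ :=
  δ / Real.sqrt (2 * Real.pi * x ^ 3) * Real.exp (-(γ * x - δ) ^ 2 / (2 * x))

/-- The map `φ_σ(x) = σ (√x − 1/√x)`. -/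
noncomputable def phiMap (σ x : ℝ) : ℝ := σ * (Real.sqrt x - 1 / Real.sqrt x)

/-- The inverse map `φ_σ⁻¹(z) = 1 + z²/(2σ²) + (z/σ)√(1 + z²/(4σ²))`. -/
noncomputable def phiInv (σ z : ℝ) : ℝ :=
  1 + z ^ 2 / (2 * σ ^ 2) + z / σ * Real.sqrt (1 + z ^ 2 / (4 * σ ^ 2))

/-- Standard normal density `φ(z) = exp(−z²/2)/√(2π)`. -/
noncomputable def stdNormalPdf (z : ℝ) : ℝ := Real.exp (-z ^ 2 / 2) / Real.sqrt (2 * Real.pi)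

/-- Standard normal cumulative distribution function. -/
noncomputable def stdNormalCDF (z : ℝ) : ℝ := ∫ t in Set.Iic z, stdNormalPdf t

/-- Modified Bessel function of the second kind `K_p(z)` (integral representation). -/
noncomputable def besselK (p z : ℝ) : ℝ :=
  (1 / 2) * ∫ t in Set.Ioi (0 : ℝ), t ^ (p - 1) * Real.exp (-z * (t + 1 / t) / 2)

/-- Generalized inverse Gaussian density `f_GIG(x | γ, δ, p)`. -/
noncomputable def fGIG (γ δ p x : ℝ) : ℝ :=
  (γ / δ) ^ p * x ^ (p - 1) / (2 * besselK p (γ * δ)) *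
    Real.exp (-(γ ^ 2 * x + δ ^ 2 / x) / 2)

/-- Generalized hyperbolic density `f_GH(y | μ, β, γ, δ, p)` with `α = √(β² + γ²)`. -/
noncomputable def fGH (μ β γ δ p y : ℝ) : ℝ :=
  Real.sqrt (Real.sqrt (β ^ 2 + γ ^ 2)) *
      (γ / (Real.sqrt (β ^ 2 + γ ^ 2) * δ)) ^ p /
      (Real.sqrt (2 * Real.pi) * besselK p (δ * γ)) *
    Real.exp (β * (y - μ)) *
    besselK (p - 1 / 2) (Real.sqrt (β ^ 2 + γ ^ 2) * Real.sqrt (δ ^ 2 + (y - μ) ^ 2)) /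
    (δ ^ 2 + (y - μ) ^ 2) ^ ((1 - 2 * p) / 4)

/-! ### Auxiliary lemmas -/

lemma phiInv_phiMap' {σ x : ℝ} (hσ : 0 < σ) (hx : 0 < x) : phiInv σ (phiMap σ x) = x := by
  obtain ⟨s, hs, rfl⟩ : ∃ s : ℝ, 0 < s ∧ x = s ^ 2 :=
    ⟨Real.sqrt x, Real.sqrt_pos.2 hx, (Real.sq_sqrt hx.le).symm⟩
  have hss : Real.sqrt (s ^ 2) = s := Real.sqrt_sq hs.le
  have hσ' : σ ≠ 0 := hσ.ne'
  have hs' : s ≠ 0 := hs.ne'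
  unfold phiMap phiInv
  rw [hss]
  have harg : 1 + (σ * (s - 1 / s)) ^ 2 / (4 * σ ^ 2) = ((s + 1 / s) / 2) ^ 2 := by
    field_simp; ring
  rw [harg, Real.sqrt_sq (by positivity)]
  field_simp
  ring

lemma phiInv_eq_sq' {σ z : ℝ} (hσ : 0 < σ) :
    phiInv σ z = (Real.sqrt (1 + z ^ 2 / (4 * σ ^ 2)) + z / (2 * σ)) ^ 2 := by
  unfold phiInv
  set a := Real.sqrt (1 + z ^ 2 / (4 * σ ^ 2)) with ha
  have ha2 : a ^ 2 = 1 + z ^ 2 / (4 * σ ^ 2) := Real.sq_sqrt (by positivity)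
  linear_combination -ha2

lemma sqrt_gt_abs' {σ z : ℝ} (hσ : 0 < σ) :
    |z / (2 * σ)| < Real.sqrt (1 + z ^ 2 / (4 * σ ^ 2)) := by
  rw [← Real.sqrt_sq_eq_abs]
  apply Real.sqrt_lt_sqrt (by positivity)
  have h4 : (z / (2 * σ)) ^ 2 = z ^ 2 / (4 * σ ^ 2) := by rw [div_pow]; ring_nf
  rw [h4]; linarith

lemma phiInv_pos' {σ : ℝ} (hσ : 0 < σ) (z : ℝ) : 0 < phiInv σ z := by
  rw [phiInv_eq_sq' hσ]
  have h := abs_lt.1 (sqrt_gt_abs' hσ (z := z))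
  nlinarith [h.1, h.2]

lemma phiMap_phiInv' {σ : ℝ} (hσ : 0 < σ) (z : ℝ) : phiMap σ (phiInv σ z) = z := by
  have hw : 0 < Real.sqrt (1 + z ^ 2 / (4 * σ ^ 2)) + z / (2 * σ) := by
    have h := (abs_lt.1 (sqrt_gt_abs' hσ (z := z))).1
    linarith
  have hsq : Real.sqrt (phiInv σ z) = Real.sqrt (1 + z ^ 2 / (4 * σ ^ 2)) + z / (2 * σ) := by
    rw [phiInv_eq_sq' hσ, Real.sqrt_sq hw.le]
  unfold phiMap
  rw [hsq]
  set a := Real.sqrt (1 + z ^ 2 / (4 * σ ^ 2)) with ha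
  have ha2 : a ^ 2 = 1 + z ^ 2 / (4 * σ ^ 2) := Real.sq_sqrt (by positivity)
  have hσ' : σ ≠ 0 := hσ.ne'
  have hwne : a + z / (2 * σ) ≠ 0 := hw.ne'
  have ha2' : 4 * σ ^ 2 * a ^ 2 = 4 * σ ^ 2 + z ^ 2 := by rw [ha2]; field_simp
  set w := a + z / (2 * σ) with hwdef
  have key : σ * (w ^ 2 - 1) = z * w := by
    rw [hwdef]; field_simp; linear_combination ha2'
  have h1 : w - 1 / w = (w ^ 2 - 1) / w := by field_simp
  rw [h1, mul_div_assoc', key, mul_div_assoc, div_self hwne, mul_one]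

lemma phiMap_hasDerivAt' {σ x : ℝ} (hx : 0 < x) :
    HasDerivAt (phiMap σ) (σ * (x + 1) / (2 * x * Real.sqrt x)) x := by
  have hs : 0 < Real.sqrt x := Real.sqrt_pos.2 hx
  have hd1 : HasDerivAt Real.sqrt (1 / (2 * Real.sqrt x)) x := Real.hasDerivAt_sqrt hx.ne'
  have hd2 : HasDerivAt (fun y => (Real.sqrt y)⁻¹)
      (-(1 / (2 * Real.sqrt x)) / Real.sqrt x ^ 2) x := hd1.inv hs.ne'
  have hd3 := ((hd1.sub hd2).const_mul σ)
  have heq : σ * (1 / (2 * Real.sqrt x) - -(1 / (2 * Real.sqrt x)) / Real.sqrt x ^ 2)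
      = σ * (x + 1) / (2 * x * Real.sqrt x) := by
    obtain ⟨s, hs0, rfl⟩ : ∃ s : ℝ, 0 < s ∧ x = s ^ 2 :=
      ⟨Real.sqrt x, hs, (Real.sq_sqrt hx.le).symm⟩
    rw [Real.sqrt_sq hs0.le]
    have : s ≠ 0 := hs0.ne'
    field_simp
    ring
  rw [heq] at hd3
  have hfun : phiMap σ = fun y => σ * (Real.sqrt y - (Real.sqrt y)⁻¹) := by
    funext y
    simp [phiMap, one_div]
  rw [hfun]
  exact hd3

lemma sqrt_two_pi_cube' {x : ℝ} (hx : 0 < x) :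
    Real.sqrt (2 * Real.pi * x ^ 3) = Real.sqrt (2 * Real.pi) * (x * Real.sqrt x) := by
  rw [Real.sqrt_mul (by positivity : (0:ℝ) ≤ 2 * Real.pi)]
  congr 1
  rw [show x ^ 3 = x ^ 2 * x by ring, Real.sqrt_mul (by positivity), Real.sqrt_sq hx.le]

lemma fIG_inv' {σ u : ℝ} (hu : 0 < u) : fIG σ σ u⁻¹ = u ^ 3 * fIG σ σ u := by
  have hu' : u ≠ 0 := hu.ne'
  unfold fIG
  have hinv : 0 < u⁻¹ := by positivity
  rw [sqrt_two_pi_cube' hu, sqrt_two_pi_cube' hinv, Real.sqrt_inv]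
  have hexp : -(σ * u⁻¹ - σ) ^ 2 / (2 * u⁻¹) = -(σ * u - σ) ^ 2 / (2 * u) := by
    field_simp; ring
  rw [hexp]
  obtain ⟨t, ht, rfl⟩ : ∃ t : ℝ, 0 < t ∧ u = t ^ 2 :=
    ⟨Real.sqrt u, Real.sqrt_pos.2 hu, (Real.sq_sqrt hu.le).symm⟩
  rw [Real.sqrt_sq ht.le]
  set S := Real.sqrt (2 * Real.pi) with hS
  have hSpos : 0 < S := by rw [hS]; positivity
  have ht' : t ≠ 0 := ht.ne'
  have hS' : S ≠ 0 := hSpos.ne'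
  have hcoef : σ / (S * ((t ^ 2)⁻¹ * t⁻¹)) = t ^ 6 * (σ / (S * (t ^ 2 * t))) := by
    field_simp
  rw [show ((t ^ 2) ^ 3 : ℝ) = t ^ 6 by ring, hcoef]
  ring

lemma pdf_phiMap' {σ x : ℝ} (hx : 0 < x) :
    stdNormalPdf (phiMap σ x)
      = Real.exp (-(σ * x - σ) ^ 2 / (2 * x)) / Real.sqrt (2 * Real.pi) := by
  unfold stdNormalPdf phiMap
  congr 2
  obtain ⟨t, ht, rfl⟩ : ∃ t : ℝ, 0 < t ∧ x = t ^ 2 :=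
    ⟨Real.sqrt x, Real.sqrt_pos.2 hx, (Real.sq_sqrt hx.le).symm⟩
  rw [Real.sqrt_sq ht.le]
  have ht' : t ≠ 0 := ht.ne'
  field_simp

lemma key_integrand' {σ x : ℝ} (hσ : 0 < σ) (hx : 0 < x) (X Y : ℝ) :
    (σ * (x + 1) / (2 * x * Real.sqrt x)) * ((X + Y) / (1 + x) * stdNormalPdf (phiMap σ x))
      = (X * fIG σ σ x + Y * fIG σ σ x) / 2 := by
  rw [pdf_phiMap' hx]
  unfold fIG
  rw [sqrt_two_pi_cube' hx]
  set E := Real.exp (-(σ * x - σ) ^ 2 / (2 * x)) with hE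
  set S := Real.sqrt (2 * Real.pi) with hS
  have hSpos : 0 < S := by rw [hS]; positivity
  have hx1 : (1 : ℝ) + x ≠ 0 := by positivity
  have hsx : 0 < Real.sqrt x := Real.sqrt_pos.2 hx
  field_simp
  ring

lemma pow_le_exp_aux' (n : ℕ) {c t : ℝ} (hc : 0 < c) (ht : 0 ≤ t) :
    t ^ n ≤ (Nat.factorial n : ℝ) / c ^ n * Real.exp (c * t) := by
  have h := Real.pow_div_factorial_le_exp (c * t) (mul_nonneg hc.le ht) n
  rw [mul_pow] at h
  have hcn : (0:ℝ) < c ^ n := pow_pos hc n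
  have hfact : (0:ℝ) < (Nat.factorial n : ℝ) := by exact_mod_cast Nat.factorial_pos n
  calc t ^ n = (c ^ n * t ^ n / (Nat.factorial n : ℝ)) * ((Nat.factorial n : ℝ) / c ^ n) := by
        field_simp
    _ ≤ Real.exp (c * t) * ((Nat.factorial n : ℝ) / c ^ n) :=
        mul_le_mul_of_nonneg_right h (by positivity)
    _ = (Nat.factorial n : ℝ) / c ^ n * Real.exp (c * t) := mul_comm _ _

lemma zpow_exp_bound' {b : ℝ} (hb : 0 < b) (j : ℤ) :
    ∃ C : ℝ, 0 ≤ C ∧ ∀ x : ℝ, 0 < x →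
      x ^ j * Real.exp (-(b/2) * x) * Real.exp (-(b/2) * x⁻¹)
        ≤ C * Real.exp (-(b/4) * x) := by
  set m := (-j).toNat with hm
  set n := (j + m).toNat with hn
  have hmn : (n : ℤ) - m = j := by omega
  set C1 : ℝ := (Nat.factorial n : ℝ) / (b/4) ^ n with hC1
  set C2 : ℝ := (Nat.factorial m : ℝ) / (b/2) ^ m with hC2
  refine ⟨C1 * C2, by positivity, fun x hx => ?_⟩
  have hx' : x ≠ 0 := hx.ne'
  have hxj : x ^ j = x ^ n * (x⁻¹) ^ m := by
    rw [← hmn, zpow_sub₀ hx', div_eq_mul_inv, ← inv_zpow, zpow_natCast, zpow_natCast]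
  have h1 : x ^ n ≤ C1 * Real.exp ((b/4) * x) := pow_le_exp_aux' n (by positivity) hx.le
  have h2 : (x⁻¹) ^ m ≤ C2 * Real.exp ((b/2) * x⁻¹) :=
    pow_le_exp_aux' m (by positivity) (by positivity)
  have e1 : Real.exp ((b/4) * x) * Real.exp (-(b/2) * x) = Real.exp (-(b/4) * x) := by
    rw [← Real.exp_add]; congr 1; ring
  have e2 : Real.exp ((b/2) * x⁻¹) * Real.exp (-(b/2) * x⁻¹) = 1 := by
    rw [← Real.exp_add, show (b/2) * x⁻¹ + -(b/2) * x⁻¹ = 0 by ring, Real.exp_zero]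
  calc x ^ j * Real.exp (-(b/2) * x) * Real.exp (-(b/2) * x⁻¹)
      = (x ^ n * Real.exp (-(b/2) * x)) * ((x⁻¹) ^ m * Real.exp (-(b/2) * x⁻¹)) := by
        rw [hxj]; ring
    _ ≤ (C1 * Real.exp ((b/4) * x) * Real.exp (-(b/2) * x)) *
        (C2 * Real.exp ((b/2) * x⁻¹) * Real.exp (-(b/2) * x⁻¹)) := by
        apply mul_le_mul (mul_le_mul_of_nonneg_right h1 (Real.exp_pos _).le)
          (mul_le_mul_of_nonneg_right h2 (Real.exp_pos _).le) (by positivity) (by positivity)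
    _ = (C1 * C2) * Real.exp (-(b/4) * x) := by
        calc (C1 * Real.exp ((b/4) * x) * Real.exp (-(b/2) * x)) *
            (C2 * Real.exp ((b/2) * x⁻¹) * Real.exp (-(b/2) * x⁻¹))
            = (C1 * C2) * ((Real.exp ((b/4) * x) * Real.exp (-(b/2) * x)) *
              (Real.exp ((b/2) * x⁻¹) * Real.exp (-(b/2) * x⁻¹))) := by ring
          _ = (C1 * C2) * Real.exp (-(b/4) * x) := by rw [e1, e2, mul_one]

lemma sqrt_inv_le' {x : ℝ} (hx : 0 < x) : (Real.sqrt x)⁻¹ ≤ 1 + x⁻¹ := by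
  rcases le_or_gt 1 x with h | h
  · have h1 : (1:ℝ) ≤ Real.sqrt x := by
      rw [show (1:ℝ) = Real.sqrt 1 by simp]; exact Real.sqrt_le_sqrt h
    have h2 : (Real.sqrt x)⁻¹ ≤ 1 := by
      rw [inv_le_one_iff₀]; right; exact h1
    have hxinv : (0:ℝ) ≤ x⁻¹ := by positivity
    linarith
  · have hle : x ≤ Real.sqrt x := by
      have h2 := Real.sqrt_le_sqrt (show x ^ 2 ≤ x by nlinarith)
      rwa [Real.sqrt_sq hx.le] at h2
    have h2 : (Real.sqrt x)⁻¹ ≤ x⁻¹ := inv_anti₀ hx hle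
    linarith

lemma fIG_exp_split' {σ x : ℝ} (hσ : 0 < σ) (hx : 0 < x) :
    Real.exp (-(σ * x - σ) ^ 2 / (2 * x))
      = Real.exp (σ ^ 2) * (Real.exp (-(σ^2/2) * x) * Real.exp (-(σ^2/2) * x⁻¹)) := by
  rw [← Real.exp_add, ← Real.exp_add]
  congr 1
  have hx' : x ≠ 0 := hx.ne'
  field_simp
  ring

lemma fIG_bound' (σ : ℝ) (hσ : 0 < σ) (k : ℤ) :
    ∃ C : ℝ, ∀ x ∈ Ioi (0:ℝ), x ^ k * fIG σ σ x ≤ C * Real.exp (-(σ^2/4) * x) := by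
  have hb : (0:ℝ) < σ ^ 2 := by positivity
  obtain ⟨C1, hC1, h1⟩ := zpow_exp_bound' hb (k - 1)
  obtain ⟨C2, hC2, h2⟩ := zpow_exp_bound' hb (k - 2)
  set S := Real.sqrt (2 * Real.pi) with hS
  have hSpos : 0 < S := by rw [hS]; positivity
  set c0 := σ * Real.exp (σ ^ 2) / S with hc0
  have hc0pos : 0 < c0 := by positivity
  refine ⟨c0 * (C1 + C2), fun x hx => ?_⟩
  simp only [mem_Ioi] at hx
  have hx' : x ≠ 0 := hx.ne'
  have hsx : 0 < Real.sqrt x := Real.sqrt_pos.2 hx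
  set E1 := Real.exp (-(σ^2/2) * x) with hE1
  set E2 := Real.exp (-(σ^2/2) * x⁻¹) with hE2
  have hE1p : 0 < E1 := Real.exp_pos _
  have hE2p : 0 < E2 := Real.exp_pos _
  have step1 : x ^ k * fIG σ σ x = c0 * ((x ^ k * x⁻¹ * E1 * E2) * (Real.sqrt x)⁻¹) := by
    unfold fIG
    rw [sqrt_two_pi_cube' hx, fIG_exp_split' hσ hx, ← hS, ← hE1, ← hE2]
    simp only [div_eq_mul_inv, mul_inv, hc0]
    ring
  have hk1 : x ^ k * x⁻¹ = x ^ (k - 1) := (zpow_sub_one₀ hx' k).symm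
  have hk2 : x ^ (k - 1) * x⁻¹ = x ^ (k - 2) := by
    rw [← zpow_sub_one₀ hx' (k - 1)]; congr 1; ring
  have step2 : x ^ k * x⁻¹ * E1 * E2 * (Real.sqrt x)⁻¹
      ≤ x ^ (k - 1) * E1 * E2 + x ^ (k - 2) * E1 * E2 := by
    have hbnd := sqrt_inv_le' hx
    have hnn : (0:ℝ) ≤ x ^ (k - 1) * E1 * E2 := by positivity
    calc x ^ k * x⁻¹ * E1 * E2 * (Real.sqrt x)⁻¹
        = (x ^ (k-1) * E1 * E2) * (Real.sqrt x)⁻¹ := by rw [hk1]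
      _ ≤ (x ^ (k-1) * E1 * E2) * (1 + x⁻¹) := mul_le_mul_of_nonneg_left hbnd hnn
      _ = x ^ (k - 1) * E1 * E2 + x ^ (k-1) * x⁻¹ * E1 * E2 := by ring
      _ = x ^ (k - 1) * E1 * E2 + x ^ (k - 2) * E1 * E2 := by rw [hk2]
  calc x ^ k * fIG σ σ x = c0 * (x ^ k * x⁻¹ * E1 * E2 * (Real.sqrt x)⁻¹) := step1
    _ ≤ c0 * (x ^ (k - 1) * E1 * E2 + x ^ (k - 2) * E1 * E2) :=
        mul_le_mul_of_nonneg_left step2 hc0pos.le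
    _ ≤ c0 * (C1 * Real.exp (-(σ^2/4) * x) + C2 * Real.exp (-(σ^2/4) * x)) := by
        apply mul_le_mul_of_nonneg_left _ hc0pos.le
        exact add_le_add (h1 x hx) (h2 x hx)
    _ = c0 * (C1 + C2) * Real.exp (-(σ^2/4) * x) := by ring

lemma fIG_nonneg' {σ δ x : ℝ} (hσ : 0 ≤ σ) (hδ : 0 ≤ δ) : 0 ≤ fIG σ δ x := by
  unfold fIG
  positivity

lemma integrable_zpow_fIG' (σ : ℝ) (hσ : 0 < σ) (k : ℤ) :
    IntegrableOn (fun x => x ^ k * fIG σ σ x) (Ioi (0:ℝ)) := by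
  obtain ⟨C, hC⟩ := fIG_bound' σ hσ k
  apply Integrable.mono' (g := fun x => C * Real.exp (-(σ^2/4) * x))
  · exact (exp_neg_integrableOn_Ioi 0 (by positivity : (0:ℝ) < σ^2/4)).const_mul C
  · apply Measurable.aestronglyMeasurable
    apply Measurable.mul (measurable_id.pow_const k)
    unfold fIG
    have m1 : Measurable fun x : ℝ => Real.sqrt (2 * Real.pi * x ^ 3) :=
      (Real.continuous_sqrt.comp (by continuity)).measurable
    have m2 : Measurable fun x : ℝ => -(σ * x - σ) ^ 2 / (2 * x) :=
      ((by continuity : Continuous fun x : ℝ => -(σ * x - σ) ^ 2).measurable).div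
        ((by continuity : Continuous fun x : ℝ => 2 * x).measurable)
    exact (measurable_const.div m1).mul (Real.measurable_exp.comp m2)
  · rw [ae_restrict_iff' measurableSet_Ioi]
    filter_upwards with x hx
    rw [Real.norm_eq_abs, abs_of_nonneg]
    · exact hC x hx
    · exact mul_nonneg (zpow_nonneg (le_of_lt hx) k) (fIG_nonneg' hσ.le hσ.le)

lemma integral_swap_fIG' (σ : ℝ) (hσ : 0 < σ) (r : ℕ) :
    ∫ x in Ioi (0:ℝ), x ^ (1 - (r:ℤ)) * fIG σ σ x
      = ∫ x in Ioi (0:ℝ), x ^ (r:ℤ) * fIG σ σ x := by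
  have hinvimg : (fun y : ℝ => y⁻¹) '' Ioi 0 = Ioi 0 := by
    ext y
    simp only [mem_image, mem_Ioi]
    constructor
    · rintro ⟨x, hx, rfl⟩; positivity
    · intro hy; exact ⟨y⁻¹, by positivity, inv_inv y⟩
  have hd : ∀ x ∈ Ioi (0:ℝ), HasDerivWithinAt (fun y : ℝ => y⁻¹)
      ((fun y : ℝ => -(y^2)⁻¹) x) (Ioi 0) x :=
    fun x hx => (hasDerivAt_inv (ne_of_gt hx)).hasDerivWithinAt
  have hi : InjOn (fun y : ℝ => y⁻¹) (Ioi (0:ℝ)) := inv_injective.injOn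
  have key := integral_image_eq_integral_abs_deriv_smul measurableSet_Ioi hd hi
    (fun y => y ^ (1 - (r:ℤ)) * fIG σ σ y)
  rw [hinvimg] at key
  rw [key]
  apply setIntegral_congr_fun measurableSet_Ioi
  intro x hx
  simp only [mem_Ioi] at hx
  have hx' : x ≠ 0 := hx.ne'
  simp only [smul_eq_mul, abs_neg, abs_inv]
  rw [abs_of_pos (by positivity : (0:ℝ) < x ^ 2), fIG_inv' hx, inv_zpow']
  have hz : (x ^ 2)⁻¹ * x ^ (-(1 - (r:ℤ))) * x ^ (3:ℤ) = x ^ (r:ℤ) := by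
    rw [show ((x:ℝ) ^ 2)⁻¹ = x ^ (-2 : ℤ) by rw [zpow_neg]; norm_cast]
    rw [← zpow_add₀ hx', ← zpow_add₀ hx']
    congr 1
    ring
  calc (x ^ 2)⁻¹ * (x ^ (-(1 - (r:ℤ))) * (x ^ 3 * fIG σ σ x))
      = ((x ^ 2)⁻¹ * x ^ (-(1 - (r:ℤ))) * x ^ (3:ℤ)) * fIG σ σ x := by
        rw [show ((x:ℝ) ^ 3) = x ^ (3:ℤ) by norm_cast]; ring
    _ = x ^ (r:ℤ) * fIG σ σ x := by rw [hz]

/-- `∫₀^∞ x^r f_IG(x|σ,σ) dx = ∫_ℝ θ_r(φ_σ⁻¹(z)) φ(z) dz` where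
`θ_r(x) = (x^r + x^{1−r})/(1+x)`. -/
theorem ig_moment_as_gaussian_integral (σ : ℝ) (hσ : 0 < σ) (r : ℕ) (hr : 1 ≤ r) :
    ∫ x in Set.Ioi (0 : ℝ), x ^ (r : ℤ) * fIG σ σ x =
      ∫ z, (phiInv σ z ^ (r : ℤ) + phiInv σ z ^ (1 - (r : ℤ))) / (1 + phiInv σ z) *
        stdNormalPdf z := by
  have hinj : InjOn (phiMap σ) (Ioi (0:ℝ)) := by
    intro a ha b hb hab
    have h := congrArg (phiInv σ) hab
    rwa [phiInv_phiMap' hσ ha, phiInv_phiMap' hσ hb] at h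
  have himg : phiMap σ '' Ioi 0 = univ :=
    eq_univ_of_forall fun z => ⟨phiInv σ z, phiInv_pos' hσ z, phiMap_phiInv' hσ z⟩
  have hderiv : ∀ x ∈ Ioi (0:ℝ), HasDerivWithinAt (phiMap σ)
      ((fun x => σ * (x + 1) / (2 * x * Real.sqrt x)) x) (Ioi 0) x :=
    fun x hx => (phiMap_hasDerivAt' hx).hasDerivWithinAt
  have hsub := integral_image_eq_integral_abs_deriv_smul measurableSet_Ioi hderiv hinj
    (fun z => (phiInv σ z ^ (r : ℤ) + phiInv σ z ^ (1 - (r : ℤ))) / (1 + phiInv σ z) *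
      stdNormalPdf z)
  rw [himg, setIntegral_univ] at hsub
  rw [hsub]
  have hcong : EqOn
      (fun x => |σ * (x + 1) / (2 * x * Real.sqrt x)| •
        ((phiInv σ (phiMap σ x) ^ (r : ℤ) + phiInv σ (phiMap σ x) ^ (1 - (r : ℤ))) /
          (1 + phiInv σ (phiMap σ x)) * stdNormalPdf (phiMap σ x)))
      (fun x => (x ^ (r:ℤ) * fIG σ σ x + x ^ (1 - (r:ℤ)) * fIG σ σ x) / 2) (Ioi 0) := by
    intro x hx
    simp only [mem_Ioi] at hx
    have hsx : 0 < Real.sqrt x := Real.sqrt_pos.2 hx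
    simp only [smul_eq_mul]
    rw [phiInv_phiMap' hσ hx,
      abs_of_pos (by positivity : (0:ℝ) < σ * (x + 1) / (2 * x * Real.sqrt x))]
    exact key_integrand' hσ hx _ _
  rw [setIntegral_congr_fun measurableSet_Ioi hcong]
  rw [show (fun x : ℝ => (x ^ (r:ℤ) * fIG σ σ x + x ^ (1 - (r:ℤ)) * fIG σ σ x) / 2)
      = fun x : ℝ => (x ^ (r:ℤ) * fIG σ σ x + x ^ (1 - (r:ℤ)) * fIG σ σ x) / 2 from rfl]
  rw [integral_div]
  rw [integral_add (integrable_zpow_fIG' σ hσ (r:ℤ)) (integrable_zpow_fIG' σ hσ (1 - (r:ℤ)))]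
  rw [integral_swap_fIG' σ hσ r]
  ring
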